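/- Let G be a finite simple graph. Then one can assign to each edge e = {u,v} of G a set c(e) of exactly two colors with c(e) ⊆ {1, 2, …, max(deg(u), deg(v)) + 1}, where deg denotes the degree in G, such that for every color i, the spanning subgraph of G whose edge set is {e : i ∈ c(e)} is acyclic (a forest). -/

import Mathlib

open Finset SimpleGraph
open scoped Classical
set_option linter.unusedSectionVars false
set_option maxHeartbeats 1600000


/-- The spanning subgraph of `G` consisting of the edges of `G` satisfying the
predicate `P`. -/
def edgePredSubgraph {V : Type*} (G : SimpleGraph V) (P : Sym2 V → Prop) :
    SimpleGraph V where
  Adj u v := G.Adj u v ∧ P s(u, v)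
  symm := ⟨fun u v ⟨h1, h2⟩ => ⟨h1.symm, by rwa [Sym2.eq_swap]⟩⟩
  loopless := ⟨fun v h => G.loopless.irrefl v h.1⟩

namespace TwoColorAux

variable {V : Type*} [Fintype V] [DecidableEq V]

/-- The simple graph on `V` with edge set (the non-diagonal part of) `B`. -/
def Gr (B : Finset (Sym2 V)) : SimpleGraph V := SimpleGraph.fromEdgeSet (B : Set (Sym2 V))

lemma Gr_adj {B : Finset (Sym2 V)} {u v : V} : (Gr B).Adj u v ↔ s(u, v) ∈ B ∧ u ≠ v := by
  simp [Gr]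

lemma Gr_mono {B B' : Finset (Sym2 V)} (h : B ⊆ B') : Gr B ≤ Gr B' := by
  intro u v huv
  rw [Gr_adj] at huv ⊢
  exact ⟨h huv.1, huv.2⟩

/-- A finset of `Sym2 V` is *good* if it contains no diagonal elements. -/
def Good (B : Finset (Sym2 V)) : Prop := ∀ e ∈ B, ¬ e.IsDiag

lemma Good.mono {B B' : Finset (Sym2 V)} (h : B ⊆ B') (hB' : Good B') : Good B :=
  fun e he => hB' e (h he)

lemma Gr_edgeSet {B : Finset (Sym2 V)} (hB : Good B) : (Gr B).edgeSet = (B : Set (Sym2 V)) := by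
  rw [Gr, SimpleGraph.edgeSet_fromEdgeSet]
  ext e
  simp only [Set.mem_diff, Set.mem_setOf_eq, Finset.mem_coe, and_iff_left_iff_imp]
  exact fun he => hB e he

lemma Gr_erase {B : Finset (Sym2 V)} {e : Sym2 V} :
    Gr (B.erase e) = Gr B \ SimpleGraph.fromEdgeSet {e} := by
  ext u v
  simp only [Gr_adj, SimpleGraph.sdiff_adj, Gr, SimpleGraph.fromEdgeSet_adj,
    Finset.mem_erase, Set.mem_singleton_iff, Finset.mem_coe]
  tauto

lemma Gr_empty : Gr (∅ : Finset (Sym2 V)) = ⊥ := by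
  simp [Gr]

/-- Reachability split after erasing an edge `s(u,v)`. -/
lemma reach_erase_split {B : Finset (Sym2 V)} {u v a b : V}
    (h : (Gr B).Reachable a b) (e : Sym2 V) (he : e = s(u, v)) :
    (Gr (B.erase e)).Reachable a b ∨
      ((Gr (B.erase e)).Reachable a u ∧ (Gr (B.erase e)).Reachable v b) ∨
      ((Gr (B.erase e)).Reachable a v ∧ (Gr (B.erase e)).Reachable u b) := by
  obtain ⟨w⟩ := h
  induction w with
  | nil => exact Or.inl (Reachable.refl _)
  | @cons x y z hxy p ih =>
    by_cases hxe : s(x, y) = e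
    · -- the edge used is e, so {x,y} = {u,v}
      rw [he, Sym2.eq_iff] at hxe
      rcases hxe with ⟨hx, hy⟩ | ⟨hx, hy⟩
      · subst hx; subst hy
        -- x = u, y = v; walk from v to b
        rcases ih with h1 | ⟨h2, h3⟩ | ⟨h4, h5⟩
        · exact Or.inr (Or.inl ⟨Reachable.refl _, h1⟩)
        · -- v reaches u, v reaches b... h2 : R v u, h3 : R v b
          exact Or.inl (((h2.symm).trans h3))
        · -- h4 : R v v, h5 : R u b
          exact Or.inl h5
      · subst hx; subst hy
        rcases ih with h1 | ⟨h2, h3⟩ | ⟨h4, h5⟩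
        · exact Or.inr (Or.inr ⟨Reachable.refl _, h1⟩)
        · exact Or.inl h3
        · exact Or.inl ((h4.symm).trans h5)
    · -- edge is kept
      have hadj : (Gr (B.erase e)).Adj x y := by
        rw [Gr_adj] at hxy ⊢
        exact ⟨Finset.mem_erase.2 ⟨hxe, hxy.1⟩, hxy.2⟩
      have hr : (Gr (B.erase e)).Reachable x y := hadj.reachable
      rcases ih with h1 | ⟨h2, h3⟩ | ⟨h4, h5⟩
      · exact Or.inl (hr.trans h1)
      · exact Or.inr (Or.inl ⟨hr.trans h2, h3⟩)
      · exact Or.inr (Or.inr ⟨hr.trans h4, h5⟩)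

/-- If the ends of an erased edge stay connected, reachability is unchanged. -/
lemma reach_erase_of_reach {B : Finset (Sym2 V)} {u v : V} (e : Sym2 V) (he : e = s(u, v))
    (huv : (Gr (B.erase e)).Reachable u v) {a b : V} :
    (Gr B).Reachable a b ↔ (Gr (B.erase e)).Reachable a b := by
  constructor
  · intro h
    rcases reach_erase_split h e he with h1 | ⟨h2, h3⟩ | ⟨h4, h5⟩
    · exact h1
    · exact (h2.trans huv).trans h3
    · exact (h4.trans huv.symm).trans h5
  · intro h
    exact h.mono (Gr_mono (Finset.erase_subset _ _))


-- ## components and counting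

/-- Acyclicity descends to subgraphs. -/
lemma acyclic_of_le {H H' : SimpleGraph V} (hle : H ≤ H') (h : H'.IsAcyclic) : H.IsAcyclic := by
  rw [isAcyclic_iff_forall_edge_isBridge] at h ⊢
  intro e he
  induction e with
  | _ u v =>
    have he' : s(u, v) ∈ H'.edgeSet := SimpleGraph.edgeSet_mono hle he
    have hb := h he'
    rw [SimpleGraph.isBridge_iff] at hb ⊢
    exact fun hr => hb (hr.mono (sdiff_le_sdiff_right hle))

/-- The connected component of `v` in `Gr B`, as a `Finset`. -/
noncomputable def cset (B : Finset (Sym2 V)) (v : V) : Finset V :=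
  @Finset.filter V (fun w => (Gr B).Reachable v w) (Classical.decPred _) Finset.univ

lemma mem_cset {B : Finset (Sym2 V)} {v w : V} : w ∈ cset B v ↔ (Gr B).Reachable v w := by
  simp [cset]

lemma self_mem_cset {B : Finset (Sym2 V)} {v : V} : v ∈ cset B v := mem_cset.2 (Reachable.refl _)

lemma cset_eq_of_reach {B : Finset (Sym2 V)} {v w : V} (h : (Gr B).Reachable v w) :
    cset B v = cset B w := by
  ext x; rw [mem_cset, mem_cset]
  exact ⟨fun hx => h.symm.trans hx, fun hx => h.trans hx⟩

lemma cset_eq_of_mem {B : Finset (Sym2 V)} {v w : V} (h : w ∈ cset B v) :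
    cset B w = cset B v := (cset_eq_of_reach (mem_cset.1 h)).symm

noncomputable def comps (B : Finset (Sym2 V)) : Finset (Finset V) :=
  Finset.univ.image (cset B)

noncomputable def γ (B : Finset (Sym2 V)) : ℕ := (comps B).card

lemma mem_comps {B : Finset (Sym2 V)} {C : Finset V} : C ∈ comps B ↔ ∃ v, cset B v = C := by
  simp [comps]

lemma comps_nonempty_mem {B : Finset (Sym2 V)} {C : Finset V} (h : C ∈ comps B) : C.Nonempty := by
  obtain ⟨v, rfl⟩ := mem_comps.1 h
  exact ⟨v, self_mem_cset⟩

lemma comps_disjoint {B : Finset (Sym2 V)} {C C' : Finset V} (hC : C ∈ comps B)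
    (hC' : C' ∈ comps B) (hne : C ≠ C') : Disjoint C C' := by
  obtain ⟨v, rfl⟩ := mem_comps.1 hC
  obtain ⟨w, rfl⟩ := mem_comps.1 hC'
  rw [Finset.disjoint_left]
  intro x hx hx'
  exact hne ((cset_eq_of_mem hx).symm.trans (cset_eq_of_mem hx'))

lemma comps_biUnion {B : Finset (Sym2 V)} : (comps B).biUnion (fun C => C) = Finset.univ := by
  ext v
  simp only [Finset.mem_biUnion, Finset.mem_univ, iff_true]
  exact ⟨cset B v, mem_comps.2 ⟨v, rfl⟩, self_mem_cset⟩

lemma sum_comps_card {B : Finset (Sym2 V)} : ∑ C ∈ comps B, C.card = Fintype.card V := by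
  rw [← Finset.card_biUnion (fun C hC C' hC' hne => comps_disjoint hC hC' hne)]
  rw [comps_biUnion]
  rfl

lemma γ_empty : γ (∅ : Finset (Sym2 V)) = Fintype.card V := by
  have h : ∀ v : V, cset (∅ : Finset (Sym2 V)) v = {v} := by
    intro v
    ext w
    rw [mem_cset, Gr_empty, Finset.mem_singleton]
    exact ⟨fun h => (SimpleGraph.reachable_bot.1 h).symm ▸ rfl, fun h => h ▸ Reachable.refl _⟩
  unfold γ comps
  rw [show cset (∅ : Finset (Sym2 V)) = fun v => ({v} : Finset V) from funext h]
  rw [Finset.card_image_of_injective _ (fun a b hab => Finset.singleton_injective hab)]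
  rfl

/-- Erasing a bridge whose ends become disconnected increases the component count by one;
formulated additively. -/
lemma γ_erase {B : Finset (Sym2 V)} {u v : V} {e : Sym2 V} (he : e = s(u, v))
    (heB : e ∈ B) (hne : u ≠ v) (hnr : ¬ (Gr (B.erase e)).Reachable u v) :
    ∃ m : ℕ, γ B = m + 1 ∧ γ (B.erase e) = m + 2 := by
  set B' := B.erase e with hB'
  have hmono : Gr B' ≤ Gr B := Gr_mono (Finset.erase_subset _ _)
  have hadj : (Gr B).Adj u v := Gr_adj.2 ⟨he ▸ heB, hne⟩
  have c1 : ∀ w, (Gr B).Reachable u w ↔ ((Gr B').Reachable u w ∨ (Gr B').Reachable v w) := by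
    intro w
    constructor
    · intro h
      rcases reach_erase_split h e he with h1 | ⟨h2, h3⟩ | ⟨h4, h5⟩
      · exact Or.inl h1
      · exact Or.inr h3
      · exact absurd h4 hnr
    · rintro (h | h)
      · exact h.mono hmono
      · exact hadj.reachable.trans (h.mono hmono)
  have hcu : ∀ w, w ∈ cset B' u → cset B w = cset B u := by
    intro w hw
    exact cset_eq_of_mem (mem_cset.2 ((mem_cset.1 hw).mono hmono))
  have hcv : ∀ w, w ∈ cset B' v → cset B w = cset B u := by
    intro w hw
    have : (Gr B).Reachable u w := hadj.reachable.trans ((mem_cset.1 hw).mono hmono)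
    exact cset_eq_of_mem (mem_cset.2 this)
  have c4 : cset B u = cset B' u ∪ cset B' v := by
    ext x
    rw [mem_cset, Finset.mem_union, mem_cset, mem_cset]
    exact c1 x
  have c2 : ∀ w, w ∉ cset B' u ∪ cset B' v → cset B w = cset B' w := by
    intro w hw
    rw [Finset.mem_union, mem_cset, mem_cset] at hw
    push_neg at hw
    ext x
    rw [mem_cset, mem_cset]
    constructor
    · intro h
      rcases reach_erase_split h e he with h1 | ⟨h2, h3⟩ | ⟨h4, h5⟩
      · exact h1
      · exact absurd h2.symm hw.1
      · exact absurd h4.symm hw.2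
    · exact fun h => h.mono hmono
  set X : Finset V := cset B' u ∪ cset B' v with hX
  set S : Finset (Finset V) := (comps B') \ {cset B' u, cset B' v} with hS
  have hCuCv : cset B' u ≠ cset B' v := by
    intro h
    exact hnr (mem_cset.1 (h ▸ self_mem_cset))
  have hXmem : X ∈ comps B := c4 ▸ mem_comps.2 ⟨u, rfl⟩
  have hcompsB : comps B = insert X S := by
    ext C
    constructor
    · intro hC
      obtain ⟨w, rfl⟩ := mem_comps.1 hC
      by_cases hw : w ∈ X
      · rw [Finset.mem_insert]
        left
        rw [hX, Finset.mem_union] at hw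
        rcases hw with hw | hw
        · rw [hcu w hw, c4]
        · rw [hcv w hw, c4]
      · rw [Finset.mem_insert]
        right
        rw [hS, Finset.mem_sdiff]
        refine ⟨c2 w hw ▸ mem_comps.2 ⟨w, rfl⟩, ?_⟩
        rw [hX, Finset.mem_union, mem_cset, mem_cset] at hw
        push_neg at hw
        rw [c2 w (by rw [hX, Finset.mem_union, mem_cset, mem_cset]; push_neg; exact hw)]
        intro hmem
        rcases Finset.mem_insert.1 hmem with h | h
        · exact hw.1 (mem_cset.1 (h ▸ self_mem_cset)).symm
        · rw [Finset.mem_singleton] at h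
          exact hw.2 (mem_cset.1 (h ▸ self_mem_cset)).symm
    · intro hC
      rcases Finset.mem_insert.1 hC with h | h
      · exact h ▸ hXmem
      · rw [hS, Finset.mem_sdiff] at h
        obtain ⟨hC', hCne⟩ := h
        obtain ⟨w, rfl⟩ := mem_comps.1 hC'
        have hw : w ∉ X := by
          rw [hX, Finset.mem_union]
          rintro (hw | hw)
          · exact hCne (Finset.mem_insert.2 (Or.inl (cset_eq_of_mem hw)))
          · exact hCne (Finset.mem_insert.2 (Or.inr (Finset.mem_singleton.2
              (cset_eq_of_mem hw))))
        exact (c2 w hw) ▸ mem_comps.2 ⟨w, rfl⟩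
  have hXnotS : X ∉ S := by
    rw [hS, Finset.mem_sdiff]
    rintro ⟨hX1, hX2⟩
    obtain ⟨w, hw⟩ := mem_comps.1 hX1
    have hu : u ∈ cset B' w := hw.symm ▸ (Finset.mem_union.2 (Or.inl self_mem_cset))
    exact hX2 (Finset.mem_insert.2 (Or.inl (by rw [← hw, cset_eq_of_mem hu])))
  have hsub : {cset B' u, cset B' v} ⊆ comps B' := by
    intro C hC
    rcases Finset.mem_insert.1 hC with h | h
    · exact h ▸ mem_comps.2 ⟨u, rfl⟩
    · rw [Finset.mem_singleton] at h
      exact h ▸ mem_comps.2 ⟨v, rfl⟩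
  refine ⟨S.card, ?_, ?_⟩
  · rw [γ, hcompsB, Finset.card_insert_of_notMem hXnotS]
  · have : comps B' = S ∪ {cset B' u, cset B' v} := by
      rw [hS, Finset.sdiff_union_of_subset hsub]
    rw [show γ (B.erase e) = #(comps B') from rfl, this, Finset.card_union_of_disjoint (by
      rw [hS]; exact Finset.sdiff_disjoint)]
    rw [Finset.card_insert_of_notMem (by rw [Finset.mem_singleton]; exact hCuCv),
      Finset.card_singleton]


-- ## forests

lemma forest_card_aux :
    ∀ (n : ℕ) (B : Finset (Sym2 V)), B.card ≤ n → Good B → (Gr B).IsAcyclic →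
      B.card + γ B = Fintype.card V := by
  intro n
  induction n with
  | zero =>
    intro B hc _ _
    rw [Finset.card_eq_zero.1 (Nat.le_zero.1 hc)] at *
    simpa using γ_empty
  | succ n ih =>
    intro B hc hB hac
    rcases Finset.eq_empty_or_nonempty B with rfl | ⟨e, he⟩
    · simpa using γ_empty
    · revert he
      induction e using Sym2.ind with
      | _ u v =>
        intro he
        have hne : u ≠ v := fun h => hB _ he (Sym2.mk_isDiag_iff.2 h)
        have hedge : s(u, v) ∈ (Gr B).edgeSet := by
          rw [Gr_edgeSet hB]; exact he
        have hbr := (isAcyclic_iff_forall_edge_isBridge.1 hac) hedge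
        rw [SimpleGraph.isBridge_iff] at hbr
        have hnr : ¬ (Gr (B.erase s(u, v))).Reachable u v := by
          rw [Gr_erase]; exact hbr
        obtain ⟨m, hm1, hm2⟩ := γ_erase rfl he hne hnr
        have hcard : (B.erase s(u, v)).card + 1 = B.card := Finset.card_erase_add_one he
        have hgood : Good (B.erase s(u, v)) := fun f hf => hB f (Finset.erase_subset _ _ hf)
        have hacy : (Gr (B.erase s(u, v))).IsAcyclic :=
          acyclic_of_le (Gr_mono (Finset.erase_subset _ _)) hac
        have hih := ih (B.erase s(u, v)) (by omega) hgood hacy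
        omega

lemma forest_card {B : Finset (Sym2 V)} (hB : Good B) (hac : (Gr B).IsAcyclic) :
    B.card + γ B = Fintype.card V :=
  forest_card_aux B.card B le_rfl hB hac

lemma exists_spanning_forest_aux :
    ∀ (n : ℕ) (B : Finset (Sym2 V)), B.card ≤ n → Good B →
      ∃ Y, Y ⊆ B ∧ (Gr Y).IsAcyclic ∧ ∀ a b, (Gr Y).Reachable a b ↔ (Gr B).Reachable a b := by
  intro n
  induction n with
  | zero =>
    intro B hc _
    rw [Finset.card_eq_zero.1 (Nat.le_zero.1 hc)]
    exact ⟨∅, Finset.Subset.refl _, by simp [Gr], fun a b => Iff.rfl⟩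
  | succ n ih =>
    intro B hc hB
    by_cases hac : (Gr B).IsAcyclic
    · exact ⟨B, Finset.Subset.refl _, hac, fun a b => Iff.rfl⟩
    · rw [SimpleGraph.IsAcyclic] at hac
      push_neg at hac
      obtain ⟨x, w, hcyc⟩ := hac
      have hlen : w.edges ≠ [] := by
        have h3 := hcyc.three_le_length
        intro hnil
        rw [← SimpleGraph.Walk.length_edges, hnil] at h3
        simp at h3
      obtain ⟨e, heme⟩ := List.exists_mem_of_ne_nil _ hlen
      have heB : e ∈ B := by
        have := w.edges_subset_edgeSet heme
        rwa [Gr_edgeSet hB] at this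
      revert heme
      induction e using Sym2.ind with
      | _ a b =>
        intro heme
        have hreach : (Gr B).Adj a b ∧ (Gr B \ SimpleGraph.fromEdgeSet {s(a, b)}).Reachable a b :=
          SimpleGraph.adj_and_reachable_delete_edges_iff_exists_cycle.2 ⟨x, w, hcyc, heme⟩
        have hra : (Gr (B.erase s(a, b))).Reachable a b := by
          rw [Gr_erase]; exact hreach.2
        have hiff := fun c d => reach_erase_of_reach (B := B) s(a, b) rfl hra (a := c) (b := d)
        have hcard : (B.erase s(a, b)).card + 1 = B.card := Finset.card_erase_add_one heB
        obtain ⟨Y, hY1, hY2, hY3⟩ := ih (B.erase s(a, b)) (by omega)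
          (fun f hf => hB f (Finset.erase_subset _ _ hf))
        exact ⟨Y, hY1.trans (Finset.erase_subset _ _), hY2,
          fun c d => (hY3 c d).trans (hiff c d).symm⟩

lemma exists_spanning_forest (B : Finset (Sym2 V)) (hB : Good B) :
    ∃ Y, Y ⊆ B ∧ (Gr Y).IsAcyclic ∧ ∀ a b, (Gr Y).Reachable a b ↔ (Gr B).Reachable a b :=
  exists_spanning_forest_aux B.card B le_rfl hB

lemma γ_le_γ {B T : Finset (Sym2 V)}
    (h : ∀ a b, (Gr B).Reachable a b → (Gr T).Reachable a b) : γ T ≤ γ B := by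
  classical
  refine Finset.card_le_card_of_surjOn
    (fun C => if hC : C.Nonempty then cset T hC.choose else ∅) ?_
  intro D hD
  simp only [Finset.coe_image, Set.mem_image, Finset.mem_coe] at hD ⊢
  obtain ⟨v, rfl⟩ := mem_comps.1 hD
  refine ⟨cset B v, mem_comps.2 ⟨v, rfl⟩, ?_⟩
  have hne : (cset B v).Nonempty := ⟨v, self_mem_cset⟩
  rw [dif_pos hne]
  have hmem : hne.choose ∈ cset B v := hne.choose_spec
  exact (cset_eq_of_reach (h _ _ (mem_cset.1 hmem))).symm

lemma γ_congr {B T : Finset (Sym2 V)}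
    (h : ∀ a b, (Gr B).Reachable a b ↔ (Gr T).Reachable a b) : γ B = γ T :=
  le_antisymm (γ_le_γ fun a b hab => (h a b).2 hab) (γ_le_γ fun a b hab => (h a b).1 hab)

lemma forest_dominated_card_le {Y T : Finset (Sym2 V)} (hY : Good Y) (hacY : (Gr Y).IsAcyclic)
    (hT : Good T) (hacT : (Gr T).IsAcyclic)
    (h : ∀ a b, (Gr Y).Reachable a b → (Gr T).Reachable a b) : Y.card ≤ T.card := by
  have h1 := forest_card hY hacY
  have h2 := forest_card hT hacT
  have h3 := γ_le_γ h
  omega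

/-- If every edge of `B` has its endpoints connected in `Gr T`, then `Gr B`-reachability
implies `Gr T`-reachability. -/
lemma reach_mono_of_edges {B T : Finset (Sym2 V)}
    (h : ∀ u v, (Gr B).Adj u v → (Gr T).Reachable u v) {a b : V}
    (hr : (Gr B).Reachable a b) : (Gr T).Reachable a b := by
  obtain ⟨w⟩ := hr
  induction w with
  | nil => exact Reachable.refl _
  | cons hadj p ih => exact (h _ _ hadj).trans ih


-- ## covered/levels


/-- The set of vertices covered by an edge of `B`. -/
noncomputable def cov (B : Finset (Sym2 V)) : Finset V :=
  Finset.univ.filter (fun v => ∃ e ∈ B, v ∈ e)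

noncomputable def pp (B : Finset (Sym2 V)) : ℕ := (cov B).card

noncomputable def ntComps (B : Finset (Sym2 V)) : Finset (Finset V) :=
  (comps B).filter (fun C => 2 ≤ C.card)

noncomputable def kk (B : Finset (Sym2 V)) : ℕ := (ntComps B).card

lemma mem_cov {B : Finset (Sym2 V)} {v : V} : v ∈ cov B ↔ ∃ e ∈ B, v ∈ e := by simp [cov]

lemma cset_eq_singleton_of_uncov {B : Finset (Sym2 V)} {v : V} (h : v ∉ cov B) :
    cset B v = {v} := by
  ext x
  rw [mem_cset, Finset.mem_singleton]
  constructor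
  · intro hr
    obtain ⟨w⟩ := hr
    cases w with
    | nil => rfl
    | cons hadj p =>
      rw [Gr_adj] at hadj
      exact absurd (mem_cov.2 ⟨_, hadj.1, Sym2.mem_mk_left _ _⟩) h
  · rintro rfl; exact Reachable.refl _
lemma two_le_cset_of_cov {B : Finset (Sym2 V)} (hB : Good B) {v : V} (h : v ∈ cov B) :
    2 ≤ (cset B v).card := by
  obtain ⟨e, heB, hve⟩ := mem_cov.1 h
  obtain ⟨y, rfl⟩ := Sym2.mem_iff_exists.1 hve
  have hne : v ≠ y := fun hvy => hB _ heB (Sym2.mk_isDiag_iff.2 hvy)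
  have hy : y ∈ cset B v := mem_cset.2 (SimpleGraph.Adj.reachable (Gr_adj.2 ⟨heB, hne⟩))
  exact Finset.one_lt_card.2 ⟨v, self_mem_cset, y, hy, hne⟩

lemma γ_add_pp {B : Finset (Sym2 V)} (hB : Good B) :
    γ B + pp B = Fintype.card V + kk B := by
  have hsplit := Finset.card_filter_add_card_filter_not
    (s := comps B) (p := fun C => 2 ≤ C.card)
  have heq : (comps B).filter (fun C => ¬ 2 ≤ C.card) =
      (Finset.univ \ cov B).image (fun v => ({v} : Finset V)) := by
    ext C
    constructor
    · intro hC
      rw [Finset.mem_filter] at hC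
      obtain ⟨v, rfl⟩ := mem_comps.1 hC.1
      have hvC : v ∉ cov B := fun hcov => hC.2 (two_le_cset_of_cov hB hcov)
      rw [Finset.mem_image]
      exact ⟨v, by simp [hvC], (cset_eq_singleton_of_uncov hvC).symm⟩
    · intro hC
      rw [Finset.mem_image] at hC
      obtain ⟨v, hv, rfl⟩ := hC
      rw [Finset.mem_sdiff] at hv
      rw [Finset.mem_filter]
      constructor
      · exact (cset_eq_singleton_of_uncov hv.2) ▸ mem_comps.2 ⟨v, rfl⟩
      · simp
  have hcardim : ((Finset.univ \ cov B).image (fun v => ({v} : Finset V))).card =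
      (Finset.univ \ cov B).card :=
    Finset.card_image_of_injective _ (fun a b hab => Finset.singleton_injective hab)
  have hsd : (Finset.univ \ cov B).card + pp B = Fintype.card V := by
    rw [pp, Finset.card_sdiff_add_card_eq_card (Finset.subset_univ _)]
    rfl
  rw [γ, ← hsplit, heq, hcardim]
  rw [kk, ntComps]
  omega

-- degree levels
noncomputable def degA (A : Finset (Sym2 V)) (v : V) : ℕ := (A.filter (fun e => v ∈ e)).card

noncomputable def NL (A : Finset (Sym2 V)) (s : ℕ) : Finset (Sym2 V) :=
  A.filter (fun e => ∃ v, v ∈ e ∧ s ≤ degA A v)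

noncomputable def aL (A : Finset (Sym2 V)) (s : ℕ) : ℕ :=
  (Finset.univ.filter (fun v => s ≤ degA A v)).card

lemma NL_subset {A : Finset (Sym2 V)} {s : ℕ} : NL A s ⊆ A := Finset.filter_subset _ _

lemma NL_anti {A : Finset (Sym2 V)} {s t : ℕ} (h : s ≤ t) : NL A t ⊆ NL A s := by
  intro e he
  rw [NL, Finset.mem_filter] at he ⊢
  obtain ⟨he1, v, hv1, hv2⟩ := he
  exact ⟨he1, v, hv1, le_trans h hv2⟩

lemma degA_pos_of_mem {A : Finset (Sym2 V)} {e : Sym2 V} (he : e ∈ A) {v : V} (hv : v ∈ e) :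
    1 ≤ degA A v :=
  Finset.card_pos.2 ⟨e, Finset.mem_filter.2 ⟨he, hv⟩⟩

lemma NL_zero {A : Finset (Sym2 V)} : NL A 0 = A := by
  rw [NL, Finset.filter_eq_self]
  intro e he
  induction e using Sym2.ind with
  | _ u v => exact ⟨u, Sym2.mem_mk_left _ _, Nat.zero_le _⟩

lemma NL_one {A : Finset (Sym2 V)} : NL A 1 = A := by
  rw [NL, Finset.filter_eq_self]
  intro e he
  induction e using Sym2.ind with
  | _ u v => exact ⟨u, Sym2.mem_mk_left _ _, degA_pos_of_mem he (Sym2.mem_mk_left _ _)⟩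

lemma degA_eq_degree {A : Finset (Sym2 V)} (hA : Good A) (v : V) :
    degA A v = (Gr A).degree v := by
  have hfin : (Gr A).edgeFinset = A :=
    (Set.toFinset_congr (Gr_edgeSet hA)).trans (Finset.toFinset_coe _)
  rw [← SimpleGraph.card_incidenceFinset_eq_degree]
  congr 1
  rw [SimpleGraph.incidenceFinset_eq_filter, hfin]
  rfl

lemma handshake {A : Finset (Sym2 V)} (hA : Good A) :
    ∑ v : V, degA A v = 2 * A.card := by
  have hfin : (Gr A).edgeFinset = A :=
    (Set.toFinset_congr (Gr_edgeSet hA)).trans (Finset.toFinset_coe _)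
  calc ∑ v : V, degA A v = ∑ v : V, (Gr A).degree v := by
        exact Finset.sum_congr rfl (fun v _ => degA_eq_degree hA v)
    _ = 2 * (Gr A).edgeFinset.card := SimpleGraph.sum_degrees_eq_twice_card_edges _
    _ = 2 * A.card := by rw [hfin]

lemma aL_sum {A : Finset (Sym2 V)} {m : ℕ} (hm : ∀ v, degA A v ≤ m) :
    ∑ s ∈ Finset.Icc 1 m, aL A s = ∑ v : V, degA A v := by
  unfold aL
  have h1 : ∀ s, (Finset.univ.filter (fun v => s ≤ degA A v)).card =
      ∑ v : V, if s ≤ degA A v then 1 else 0 := by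
    intro s; rw [Finset.card_filter]
  simp only [h1]
  rw [Finset.sum_comm]
  refine Finset.sum_congr rfl (fun v _ => ?_)
  rw [← Finset.card_filter]
  have : (Finset.Icc 1 m).filter (fun s => s ≤ degA A v) = Finset.Icc 1 (degA A v) := by
    ext s
    simp only [Finset.mem_filter, Finset.mem_Icc]
    have := hm v
    omega
  rw [this, Nat.card_Icc]
  omega


-- ## tree counting


lemma mem_ntComps {B : Finset (Sym2 V)} {C : Finset V} :
    C ∈ ntComps B ↔ C ∈ comps B ∧ 2 ≤ C.card := Finset.mem_filter

lemma ntComps_nonempty_mem {B : Finset (Sym2 V)} {C : Finset V} (h : C ∈ ntComps B) :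
    C.Nonempty := comps_nonempty_mem (mem_ntComps.1 h).1

lemma comp_closed {B : Finset (Sym2 V)} {C : Finset V} (hC : C ∈ comps B) {v : V} (hv : v ∈ C) :
    cset B v = C := by
  obtain ⟨w, rfl⟩ := mem_comps.1 hC
  exact (cset_eq_of_reach (mem_cset.1 hv)).symm

lemma comp_subset_parent {B' B : Finset (Sym2 V)} (h : B' ⊆ B) {C : Finset V}
    (hC : C ∈ comps B') {v : V} (hv : v ∈ C) : C ⊆ cset B v := by
  intro x hx
  rw [← comp_closed hC hv] at hx
  exact mem_cset.2 ((mem_cset.1 hx).mono (Gr_mono h))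

lemma exists_adj_of_reach_ne {B : Finset (Sym2 V)} {v y : V} (h : (Gr B).Reachable v y)
    (hne : v ≠ y) : ∃ z, s(v, z) ∈ B ∧ (Gr B).Adj v z := by
  obtain ⟨w⟩ := h
  cases w with
  | nil => exact absurd rfl hne
  | cons hadj p =>
    rw [Gr_adj] at hadj
    exact ⟨_, hadj.1, Gr_adj.2 hadj⟩

lemma covered_of_mem_ntComp {B : Finset (Sym2 V)} {C : Finset V} (hC : C ∈ ntComps B)
    {x : V} (hx : x ∈ C) : x ∈ cov B := by
  obtain ⟨hC1, hC2⟩ := mem_ntComps.1 hC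
  obtain ⟨y, hy, hne⟩ := Finset.exists_mem_ne (s := C) (by omega) x
  have hr : (Gr B).Reachable x y := by
    have h1 := comp_closed hC1 hx
    exact mem_cset.1 (h1.symm ▸ hy)
  obtain ⟨z, hz, _⟩ := exists_adj_of_reach_ne hr (Ne.symm hne)
  exact mem_cov.2 ⟨_, hz, Sym2.mem_mk_left _ _⟩

lemma size_ntComp {A : Finset (Sym2 V)} (hA : Good A) {s : ℕ} {C : Finset V}
    (hC : C ∈ ntComps (NL A s)) : s + 1 ≤ C.card := by
  obtain ⟨hC1, hC2⟩ := mem_ntComps.1 hC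
  obtain ⟨v, hv⟩ := comps_nonempty_mem hC1
  obtain ⟨y, hy, hne⟩ := Finset.exists_mem_ne (s := C) (by omega) v
  have hr : (Gr (NL A s)).Reachable v y :=
    mem_cset.1 ((comp_closed hC1 hv).symm ▸ hy)
  obtain ⟨z, hz, hadjz⟩ := exists_adj_of_reach_ne hr (Ne.symm hne)
  -- the edge s(v,z) ∈ NL A s has an endpoint w with degA A w ≥ s
  have hzC : z ∈ C := by
    rw [← comp_closed hC1 hv]
    exact mem_cset.2 hadjz.reachable
  obtain ⟨-, w, hw1, hw2⟩ := Finset.mem_filter.1 hz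
  have hwC : w ∈ C := by
    rcases Sym2.mem_iff.1 hw1 with rfl | rfl
    · exact hv
    · exact hzC
  -- all A-neighbors of w are in C
  have hnb : ∀ t, (Gr A).Adj w t → t ∈ C := by
    intro t ht
    have hAdjNL : (Gr (NL A s)).Adj w t := by
      rw [Gr_adj] at ht ⊢
      exact ⟨Finset.mem_filter.2 ⟨ht.1, w, Sym2.mem_mk_left _ _, hw2⟩, ht.2⟩
    rw [← comp_closed hC1 hwC]
    exact mem_cset.2 hAdjNL.reachable
  have hsub : insert w ((Gr A).neighborFinset w) ⊆ C := by
    intro t ht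
    rcases Finset.mem_insert.1 ht with rfl | ht
    · exact hwC
    · exact hnb t ((Gr A).mem_neighborFinset w t |>.1 ht)
  have hwnotin : w ∉ (Gr A).neighborFinset w := by
    rw [SimpleGraph.mem_neighborFinset]
    exact (Gr A).irrefl
  calc s + 1 ≤ (Gr A).degree w + 1 := by
        rw [← degA_eq_degree hA]; omega
    _ = (insert w ((Gr A).neighborFinset w)).card := by
        rw [Finset.card_insert_of_notMem hwnotin]; rfl
    _ ≤ C.card := Finset.card_le_card hsub

lemma own_level {B : Finset (Sym2 V)} {C : Finset V} (hC : C ∈ ntComps B) :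
    (ntComps B).filter (· ⊆ C) = {C} := by
  ext D
  rw [Finset.mem_filter, Finset.mem_singleton]
  constructor
  · rintro ⟨hD, hDC⟩
    by_contra hne
    have hdisj := comps_disjoint (mem_ntComps.1 hD).1 (mem_ntComps.1 hC).1 hne
    obtain ⟨x, hx⟩ := ntComps_nonempty_mem hD
    exact Finset.disjoint_left.1 hdisj hx (hDC hx)
  · rintro rfl
    exact ⟨hC, Finset.Subset.refl _⟩

lemma group {B'' B' : Finset (Sym2 V)} (h : B'' ⊆ B') (C : Finset V)
    (hC : ∀ v ∈ C, cset B' v ⊆ C) :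
    ((ntComps B'').filter (· ⊆ C)).card
      = ∑ D ∈ (ntComps B').filter (· ⊆ C), ((ntComps B'').filter (· ⊆ D)).card := by
  have heq : (ntComps B'').filter (· ⊆ C)
      = ((ntComps B').filter (· ⊆ C)).biUnion (fun D => (ntComps B'').filter (· ⊆ D)) := by
    ext E
    rw [Finset.mem_filter, Finset.mem_biUnion]
    constructor
    · rintro ⟨hE, hEC⟩
      obtain ⟨v, hv⟩ := ntComps_nonempty_mem hE
      refine ⟨cset B' v, ?_, ?_⟩
      · rw [Finset.mem_filter]
        refine ⟨mem_ntComps.2 ⟨mem_comps.2 ⟨v, rfl⟩, ?_⟩, hC v (hEC hv)⟩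
        calc 2 ≤ E.card := (mem_ntComps.1 hE).2
          _ ≤ (cset B' v).card :=
            Finset.card_le_card (comp_subset_parent h (mem_ntComps.1 hE).1 hv)
      · rw [Finset.mem_filter]
        exact ⟨hE, comp_subset_parent h (mem_ntComps.1 hE).1 hv⟩
    · rintro ⟨D, hD, hED⟩
      rw [Finset.mem_filter] at hD hED
      exact ⟨hED.1, hED.2.trans hD.2⟩
  rw [heq]
  refine Finset.card_biUnion ?_
  intro D1 h1 D2 h2 hne
  simp only [Finset.mem_coe] at h1 h2
  simp only [Function.onFun]
  rw [Finset.disjoint_left]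
  intro E hE1 hE2
  rw [Finset.mem_filter] at hE1 hE2 h1 h2
  obtain ⟨x, hx⟩ := ntComps_nonempty_mem hE1.1
  exact Finset.disjoint_left.1
    (comps_disjoint (mem_ntComps.1 h1.1).1 (mem_ntComps.1 h2.1).1 hne)
    (hE1.2 hx) (hE2.2 hx)

lemma closed_comp_of_level {A : Finset (Sym2 V)} {s t : ℕ} (hst : s ≤ t) {C : Finset V}
    (hC : C ∈ comps (NL A s)) : ∀ v ∈ C, cset (NL A t) v ⊆ C := by
  intro v hv
  exact (comp_subset_parent (NL_anti hst) (mem_comps.2 ⟨v, rfl⟩) self_mem_cset).trans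
    (by rw [comp_closed hC hv])

lemma tree_lemma (A : Finset (Sym2 V)) (hA : Good A) (m : ℕ) :
    ∀ (j s : ℕ), m ≤ s + j → ∀ C ∈ ntComps (NL A s),
      (∑ t ∈ Finset.Icc s m, ((ntComps (NL A t)).filter (· ⊆ C)).card) + s ≤ C.card := by
  intro j
  induction j with
  | zero =>
    intro s hm C hC
    rw [Nat.add_zero] at hm
    rcases lt_or_eq_of_le hm with h | h
    · rw [Finset.Icc_eq_empty (by omega)]
      have := size_ntComp hA hC
      simp only [Finset.sum_empty]
      omega
    · subst h
      rw [Finset.Icc_self, Finset.sum_singleton, own_level hC, Finset.card_singleton]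
      have := size_ntComp hA hC
      omega
  | succ j ih =>
    intro s hm C hC
    by_cases hms : m ≤ s
    · rcases lt_or_eq_of_le hms with h | h
      · rw [Finset.Icc_eq_empty (by omega)]
        have := size_ntComp hA hC
        simp only [Finset.sum_empty]
        omega
      · subst h
        rw [Finset.Icc_self, Finset.sum_singleton, own_level hC, Finset.card_singleton]
        have := size_ntComp hA hC
        omega
    · push_neg at hms
      have hIcc : Finset.Icc s m = insert s (Finset.Icc (s+1) m) := by
        ext x; simp only [Finset.mem_Icc, Finset.mem_insert]; omega
      have hsnot : s ∉ Finset.Icc (s+1) m := by simp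
      rw [hIcc, Finset.sum_insert hsnot, own_level hC, Finset.card_singleton]
      set children := (ntComps (NL A (s+1))).filter (· ⊆ C) with hch
      have hgroup : ∀ t ∈ Finset.Icc (s+1) m,
          ((ntComps (NL A t)).filter (· ⊆ C)).card
            = ∑ D ∈ children, ((ntComps (NL A t)).filter (· ⊆ D)).card := by
        intro t ht
        rw [Finset.mem_Icc] at ht
        exact group (NL_anti ht.1) C (closed_comp_of_level (Nat.le_succ s)
          (mem_ntComps.1 hC).1)
      rw [Finset.sum_congr rfl hgroup, Finset.sum_comm]
      set T := ∑ D ∈ children, ∑ t ∈ Finset.Icc (s+1) m,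
        ((ntComps (NL A t)).filter (· ⊆ D)).card with hT
      have hIH : ∀ D ∈ children,
          (∑ t ∈ Finset.Icc (s+1) m, ((ntComps (NL A t)).filter (· ⊆ D)).card) + (s+1)
            ≤ D.card := by
        intro D hD
        exact ih (s+1) (by omega) D (Finset.mem_filter.1 hD).1
      have hsum : T + children.card * (s+1) ≤ ∑ D ∈ children, D.card := by
        have h2 := Finset.sum_le_sum hIH
        rwa [Finset.sum_add_distrib, Finset.sum_const, smul_eq_mul] at h2
      have hdisj : ∀ x ∈ children, ∀ y ∈ children, x ≠ y → Disjoint (id x) (id y) := by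
        intro x hx y hy hne
        rw [Finset.mem_filter] at hx hy
        exact comps_disjoint (mem_ntComps.1 hx.1).1 (mem_ntComps.1 hy.1).1 hne
      have hsubC : ∑ D ∈ children, D.card ≤ C.card := by
        rw [show (∑ D ∈ children, D.card) = ∑ D ∈ children, (id D).card from rfl,
          ← Finset.card_biUnion hdisj]
        apply Finset.card_le_card
        intro x hx
        rw [Finset.mem_biUnion] at hx
        obtain ⟨D, hD, hxD⟩ := hx
        exact (Finset.mem_filter.1 hD).2 hxD
      rcases Nat.eq_zero_or_pos children.card with hc0 | hcpos
      · have hT0 : T = 0 := by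
          rw [hT, Finset.card_eq_zero.1 hc0, Finset.sum_empty]
        have hsize := size_ntComp hA hC
        omega
      · have hmul : 1 * (s+1) ≤ children.card * (s+1) := Nat.mul_le_mul_right _ hcpos
        omega


-- ## subclaim and counting claim

lemma subclaim (A : Finset (Sym2 V)) (hA : Good A) (m : ℕ) :
    (∑ s ∈ Finset.Icc 2 m, kk (NL A s)) + 2 * kk A ≤ pp A := by
  have huniv : ∀ (X : Finset (Finset V)), X.filter (· ⊆ Finset.univ) = X :=
    fun X => Finset.filter_true_of_mem (fun _ _ => Finset.subset_univ _)
  have hk : ∀ s ∈ Finset.Icc 2 m, kk (NL A s)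
      = ∑ E ∈ ntComps A, ((ntComps (NL A s)).filter (· ⊆ E)).card := by
    intro s _
    have h := group (B'' := NL A s) (B' := A) NL_subset Finset.univ
      (fun v _ => Finset.subset_univ _)
    rw [huniv (ntComps (NL A s)), huniv (ntComps A)] at h
    exact h
  rw [Finset.sum_congr rfl hk, Finset.sum_comm]
  have hperE : ∀ E ∈ ntComps A,
      (∑ s ∈ Finset.Icc 2 m, ((ntComps (NL A s)).filter (· ⊆ E)).card) + 2 ≤ E.card := by
    intro E hE
    have hEcomp : E ∈ comps A := (mem_ntComps.1 hE).1
    set ch2 := (ntComps (NL A 2)).filter (· ⊆ E) with hch2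
    have hgroup2 : ∀ s ∈ Finset.Icc 2 m,
        ((ntComps (NL A s)).filter (· ⊆ E)).card
          = ∑ D ∈ ch2, ((ntComps (NL A s)).filter (· ⊆ D)).card := by
      intro s hs
      rw [Finset.mem_Icc] at hs
      refine group (NL_anti hs.1) E ?_
      intro v hv
      have h1 := comp_subset_parent (B' := NL A 2) (B := A) NL_subset
        (mem_comps.2 ⟨v, rfl⟩) (self_mem_cset (B := NL A 2) (v := v))
      rw [comp_closed hEcomp hv] at h1
      exact h1
    rw [Finset.sum_congr rfl hgroup2, Finset.sum_comm]
    have hIH : ∀ D ∈ ch2,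
        (∑ s ∈ Finset.Icc 2 m, ((ntComps (NL A s)).filter (· ⊆ D)).card) + 2 ≤ D.card := by
      intro D hD
      exact tree_lemma A hA m m 2 (by omega) D (Finset.mem_filter.1 hD).1
    set T := ∑ D ∈ ch2, ∑ s ∈ Finset.Icc 2 m,
      ((ntComps (NL A s)).filter (· ⊆ D)).card with hT
    have hsum : T + ch2.card * 2 ≤ ∑ D ∈ ch2, D.card := by
      have h2 := Finset.sum_le_sum hIH
      rwa [Finset.sum_add_distrib, Finset.sum_const, smul_eq_mul] at h2
    have hdisj : ∀ x ∈ ch2, ∀ y ∈ ch2, x ≠ y → Disjoint (id x) (id y) := by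
      intro x hx y hy hne
      rw [Finset.mem_filter] at hx hy
      exact comps_disjoint (mem_ntComps.1 hx.1).1 (mem_ntComps.1 hy.1).1 hne
    have hsubE : ∑ D ∈ ch2, D.card ≤ E.card := by
      rw [show (∑ D ∈ ch2, D.card) = ∑ D ∈ ch2, (id D).card from rfl,
        ← Finset.card_biUnion hdisj]
      apply Finset.card_le_card
      intro x hx
      rw [Finset.mem_biUnion] at hx
      obtain ⟨D, hD, hxD⟩ := hx
      exact (Finset.mem_filter.1 hD).2 hxD
    rcases Nat.eq_zero_or_pos ch2.card with hc0 | hcpos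
    · have hT0 : T = 0 := by rw [hT, Finset.card_eq_zero.1 hc0, Finset.sum_empty]
      have hE2 := (mem_ntComps.1 hE).2
      omega
    · omega
  have hsum := Finset.sum_le_sum hperE
  rw [Finset.sum_add_distrib, Finset.sum_const, smul_eq_mul] at hsum
  have hdisjA : ∀ x ∈ ntComps A, ∀ y ∈ ntComps A, x ≠ y → Disjoint (id x) (id y) := by
    intro x hx y hy hne
    exact comps_disjoint (mem_ntComps.1 hx).1 (mem_ntComps.1 hy).1 hne
  have hcovA : (ntComps A).biUnion id = cov A := by
    ext x
    rw [Finset.mem_biUnion]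
    constructor
    · rintro ⟨E, hE, hx⟩
      exact covered_of_mem_ntComp hE hx
    · intro hx
      exact ⟨cset A x, mem_ntComps.2 ⟨mem_comps.2 ⟨x, rfl⟩, two_le_cset_of_cov hA hx⟩,
        self_mem_cset⟩
  have hcovcard : ∑ E ∈ ntComps A, E.card = pp A := by
    rw [show (∑ E ∈ ntComps A, E.card) = ∑ E ∈ ntComps A, (id E).card from rfl,
      ← Finset.card_biUnion hdisjA, hcovA]
    rfl
  rw [hcovcard] at hsum
  unfold kk
  omega

lemma CC_intr (A : Finset (Sym2 V)) (hA : Good A) (hne : A.Nonempty) {m : ℕ}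
    (hm : ∀ v, degA A v + 1 ≤ m) :
    2 * A.card + ∑ s ∈ Finset.range m, γ (NL A s) ≤ m * Fintype.card V := by
  set n := Fintype.card V with hn
  have hgood : ∀ s, Good (NL A s) := fun s e he => hA e (NL_subset he)
  have hm2 : 2 ≤ m := by
    obtain ⟨e, he⟩ := hne
    have hdeg : ∃ v, 1 ≤ degA A v := by
      induction e using Sym2.ind with
      | _ u v => exact ⟨u, degA_pos_of_mem he (Sym2.mem_mk_left _ _)⟩
    obtain ⟨v, hv⟩ := hdeg
    have := hm v
    omega
  have h2A : 2 * A.card = ∑ s ∈ Finset.Icc 1 (m-1), aL A s := by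
    rw [aL_sum (fun v => by have := hm v; omega), handshake hA]
  have hsplit : Finset.range m = insert 0 (insert 1 (Finset.Icc 2 (m-1))) := by
    ext x
    simp only [Finset.mem_range, Finset.mem_insert, Finset.mem_Icc]
    omega
  have h0 : (0:ℕ) ∉ insert 1 (Finset.Icc 2 (m-1)) := by simp
  have h1 : (1:ℕ) ∉ Finset.Icc 2 (m-1) := by simp
  rw [hsplit, Finset.sum_insert h0, Finset.sum_insert h1, NL_zero, NL_one]
  have hIcc1 : Finset.Icc 1 (m-1) = insert 1 (Finset.Icc 2 (m-1)) := by
    ext x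
    simp only [Finset.mem_insert, Finset.mem_Icc]
    omega
  rw [hIcc1, Finset.sum_insert h1] at h2A
  have haL1 : aL A 1 = pp A := by
    unfold aL pp cov
    congr 1
    ext v
    simp only [Finset.mem_filter, Finset.mem_univ, true_and]
    constructor
    · intro h
      obtain ⟨e, he⟩ := Finset.card_pos.1 h
      rw [Finset.mem_filter] at he
      exact ⟨e, he.1, he.2⟩
    · rintro ⟨e, he, hv⟩
      exact Finset.card_pos.2 ⟨e, Finset.mem_filter.2 ⟨he, hv⟩⟩
  have hF3 : ∀ s ∈ Finset.Icc 2 (m-1), aL A s + γ (NL A s) ≤ n + kk (NL A s) := by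
    intro s hs
    rw [Finset.mem_Icc] at hs
    have hsub : (Finset.univ.filter (fun v => s ≤ degA A v)) ⊆ cov (NL A s) := by
      intro v hv
      rw [Finset.mem_filter] at hv
      have hpos : 1 ≤ degA A v := le_trans (by omega) hv.2
      obtain ⟨e, he⟩ := Finset.card_pos.1 hpos
      rw [Finset.mem_filter] at he
      refine mem_cov.2 ⟨e, ?_, he.2⟩
      exact Finset.mem_filter.2 ⟨he.1, v, he.2, hv.2⟩
    have hcard := Finset.card_le_card hsub
    have hgp := γ_add_pp (hgood s)
    unfold aL
    unfold pp at hgp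
    omega
  have hF3sum := Finset.sum_le_sum hF3
  rw [Finset.sum_add_distrib, Finset.sum_add_distrib, Finset.sum_const, smul_eq_mul] at hF3sum
  have hcardIcc : (Finset.Icc 2 (m-1)).card = m - 2 := by
    rw [Nat.card_Icc]
    omega
  rw [hcardIcc] at hF3sum
  have hsubc := subclaim A hA (m-1)
  have hppA := γ_add_pp hA
  set X := (m-2) * n with hX
  set Y := m * n with hY
  have hmn : X + 2 * n = Y := by
    rw [hX, hY, ← Nat.add_mul]
    congr 1
    omega
  omega

-- ## the counting claim for a graph G

lemma sum_Icc_one_eq_sum_range (M : ℕ) (f : ℕ → ℕ) :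
    ∑ j ∈ Finset.Icc 1 M, f j = ∑ s ∈ Finset.range M, f (s+1) := by
  induction M with
  | zero => simp
  | succ M ih =>
    rw [Finset.sum_Icc_succ_top (by omega), ih, Finset.sum_range_succ]

variable (G : SimpleGraph V) [DecidableRel G.Adj]

noncomputable def ell : Sym2 V → ℕ :=
  Sym2.lift ⟨fun u v => max (G.degree u) (G.degree v) + 1, by
    intro a b; simp [max_comm]⟩

lemma ell_mk {u v : V} : ell G s(u, v) = max (G.degree u) (G.degree v) + 1 := rfl

lemma good_of_subset_edgeFinset {S : Finset (Sym2 V)} (hS : S ⊆ G.edgeFinset) : Good S := by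
  intro e he
  exact SimpleGraph.not_isDiag_of_mem_edgeSet G (SimpleGraph.mem_edgeFinset.1 (hS he))

lemma degA_le_degree {S : Finset (Sym2 V)} (hS : S ⊆ G.edgeFinset) (v : V) :
    degA S v ≤ G.degree v := by
  rw [← SimpleGraph.card_incidenceFinset_eq_degree, SimpleGraph.incidenceFinset_eq_filter]
  exact Finset.card_le_card (fun e he => by
    rw [Finset.mem_filter] at he ⊢
    exact ⟨hS he.1, he.2⟩)

lemma ell_ge_of_mem_NL {S : Finset (Sym2 V)} (hS : S ⊆ G.edgeFinset) {s : ℕ} {f : Sym2 V}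
    (hf : f ∈ NL S s) : s + 1 ≤ ell G f := by
  obtain ⟨hfS, v, hvf, hdeg⟩ := Finset.mem_filter.1 hf
  obtain ⟨y, rfl⟩ := Sym2.mem_iff_exists.1 hvf
  rw [ell_mk]
  have := degA_le_degree G hS v
  have hle : G.degree v ≤ max (G.degree v) (G.degree y) := le_max_left _ _
  omega

/-- The main counting claim: if `T j` (for `1 ≤ j ≤ M`) are forests such that each edge
`f ∈ S` with `j ≤ ℓ(f)` has its endpoints `T j`-connected, then `∑ |T j| ≥ 2|S|`. -/
lemma counting_claim (S : Finset (Sym2 V)) (hS : S ⊆ G.edgeFinset) (hSne : S.Nonempty)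
    (M : ℕ) (hMdeg : ∀ v, degA S v + 1 ≤ M)
    (T : ℕ → Finset (Sym2 V)) (hTsub : ∀ j, T j ⊆ G.edgeFinset)
    (hTac : ∀ j, (Gr (T j)).IsAcyclic)
    (hTconn : ∀ j, 1 ≤ j → j ≤ M → ∀ f ∈ S, j ≤ ell G f →
       ∀ u v, f = s(u, v) → (Gr (T j)).Reachable u v) :
    2 * S.card ≤ ∑ j ∈ Finset.Icc 1 M, (T j).card := by
  have hgoodS : Good S := good_of_subset_edgeFinset G hS
  have hgoodNL : ∀ s, Good (NL S s) := fun s e he => hgoodS e (NL_subset he)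
  choose Y hY1 hY2 hY3 using fun s : ℕ => exists_spanning_forest (NL S s) (hgoodNL s)
  have hYcard : ∀ s, (Y s).card + γ (NL S s) = Fintype.card V := by
    intro s
    have h1 := forest_card (fun e he => hgoodNL s e (hY1 s he)) (hY2 s)
    rw [γ_congr (hY3 s)] at h1
    exact h1
  have hYle : ∀ s ∈ Finset.range M, (Y s).card ≤ (T (s+1)).card := by
    intro s hs
    rw [Finset.mem_range] at hs
    refine forest_dominated_card_le (fun e he => hgoodNL s e (hY1 s he)) (hY2 s)
      (good_of_subset_edgeFinset G (hTsub (s+1))) (hTac (s+1)) ?_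
    intro a b hab
    have hr : (Gr (NL S s)).Reachable a b := (hY3 s a b).1 hab
    refine reach_mono_of_edges ?_ hr
    intro u v huv
    rw [Gr_adj] at huv
    exact hTconn (s+1) (by omega) (by omega) s(u, v) (NL_subset huv.1)
      (ell_ge_of_mem_NL G hS huv.1) u v rfl
  have hCC := CC_intr S hgoodS hSne (m := M) hMdeg
  have hsum1 : ∑ s ∈ Finset.range M, ((Y s).card + γ (NL S s)) = M * Fintype.card V := by
    rw [Finset.sum_congr rfl (fun s _ => hYcard s), Finset.sum_const, Finset.card_range,
      smul_eq_mul]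
  rw [Finset.sum_add_distrib] at hsum1
  have hsum2 : ∑ s ∈ Finset.range M, (Y s).card ≤ ∑ s ∈ Finset.range M, (T (s+1)).card :=
    Finset.sum_le_sum hYle
  rw [sum_Icc_one_eq_sum_range]
  omega

-- ## coloring framework

noncomputable def classF (c : Sym2 V → Finset ℕ) (i : ℕ) : Finset (Sym2 V) :=
  G.edgeFinset.filter (fun e => i ∈ c e)

def ValidCol (c : Sym2 V → Finset ℕ) : Prop :=
  (∀ e ∈ G.edgeFinset, c e ⊆ Finset.Icc 1 (ell G e) ∧ (c e).card ≤ 2) ∧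
  ∀ i, (Gr (classF G c i)).IsAcyclic

lemma mem_classF {c : Sym2 V → Finset ℕ} {i : ℕ} {e : Sym2 V} :
    e ∈ classF G c i ↔ e ∈ G.edgeFinset ∧ i ∈ c e := Finset.mem_filter

lemma classF_subset {c : Sym2 V → Finset ℕ} {i : ℕ} : classF G c i ⊆ G.edgeFinset :=
  Finset.filter_subset _ _

lemma classF_update_mem {c : Sym2 V → Finset ℕ} {g : Sym2 V} (hg : g ∈ G.edgeFinset)
    {X : Finset ℕ} {i : ℕ} (hi : i ∈ X) :
    classF G (Function.update c g X) i = insert g (classF G c i) := by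
  ext e
  rw [mem_classF, Finset.mem_insert, mem_classF]
  by_cases he : e = g
  · subst he
    simp [Function.update_self, hi, hg]
  · rw [Function.update_of_ne he]
    simp [he]

lemma classF_update_not_mem {c : Sym2 V → Finset ℕ} {g : Sym2 V}
    {X : Finset ℕ} {i : ℕ} (hi : i ∉ X) :
    classF G (Function.update c g X) i = (classF G c i).erase g := by
  ext e
  rw [mem_classF, Finset.mem_erase, mem_classF]
  by_cases he : e = g
  · subst he
    simp [Function.update_self, hi]
  · rw [Function.update_of_ne he]
    simp [he]

/-- Inserting an edge between two non-connected vertices keeps a forest acyclic. -/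
lemma acyclic_insert {F : Finset (Sym2 V)} (hgood : Good F) (hac : (Gr F).IsAcyclic)
    {u v : V} (hne : u ≠ v) (hnr : ¬ (Gr F).Reachable u v) :
    (Gr (insert s(u, v) F)).IsAcyclic := by
  have hgood' : Good (insert s(u, v) F) := by
    intro e he
    rcases Finset.mem_insert.1 he with rfl | he
    · rw [Sym2.mk_isDiag_iff]; exact hne
    · exact hgood e he
  have hnF : s(u, v) ∉ F := fun hmem => hnr (SimpleGraph.Adj.reachable (Gr_adj.2 ⟨hmem, hne⟩))
  rw [isAcyclic_iff_forall_edge_isBridge]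
  intro f hf
  rw [Gr_edgeSet hgood'] at hf
  rcases Finset.mem_insert.1 hf with rfl | hfF
  · rw [SimpleGraph.isBridge_iff]
    · change ¬ (Gr _ \ fromEdgeSet _).Reachable _ _
      rw [← Gr_erase]
      intro hr
      rw [Finset.erase_insert_eq_erase] at hr
      exact hnr (hr.mono (Gr_mono (Finset.erase_subset _ _)))
  · -- f is an old edge
    revert hfF
    induction f using Sym2.ind with
    | _ x y =>
      intro hfF
      have hxy : x ≠ y := fun h => hgood _ hfF (Sym2.mk_isDiag_iff.2 h)
      have hbr := (isAcyclic_iff_forall_edge_isBridge.1 hac) (by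
        rw [Gr_edgeSet hgood]; exact hfF)
      rw [SimpleGraph.isBridge_iff] at hbr
      rw [SimpleGraph.isBridge_iff]
      · change ¬ (Gr _ \ fromEdgeSet _).Reachable _ _
        rw [← Gr_erase]
        have hins : (insert s(u, v) F).erase s(x, y) = insert s(u, v) (F.erase s(x, y)) := by
          rw [Finset.erase_insert_of_ne]
          intro h
          exact hnF (h ▸ hfF)
        rw [hins]
        intro hr
        have hFe : (F.erase s(x, y)).erase s(u, v) = F.erase s(x, y) := by
          apply Finset.erase_eq_of_notMem
          intro h
          exact hnF (Finset.erase_subset _ _ h)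
        have hsplit := reach_erase_split (B := insert s(u, v) (F.erase s(x, y))) hr s(u, v) rfl
        rw [Finset.erase_insert_eq_erase, hFe] at hsplit
        have hnrxy : ¬ (Gr (F.erase s(x, y))).Reachable x y := by
          rw [Gr_erase]; exact hbr
        have hmo : Gr (F.erase s(x, y)) ≤ Gr F := Gr_mono (Finset.erase_subset _ _)
        have hadjxy : (Gr F).Reachable x y :=
          SimpleGraph.Adj.reachable (Gr_adj.2 ⟨hfF, hxy⟩)
        rcases hsplit with h1 | ⟨h2, h3⟩ | ⟨h4, h5⟩
        · exact hnrxy h1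
        · -- x ~ u and v ~ y in F.erase; then u ~ v in Gr F via x ~ y
          exact hnr (((h2.mono hmo).symm.trans hadjxy).trans (h3.mono hmo).symm)
        · exact hnr (((h5.mono hmo).trans hadjxy.symm).trans (h4.mono hmo))

-- ## connectivity along classes

def conn (c : Sym2 V → Finset ℕ) (i : ℕ) (f : Sym2 V) : Prop :=
  ∃ u v, f = s(u, v) ∧ (Gr (classF G c i)).Reachable u v

lemma conn_spec {c : Sym2 V → Finset ℕ} {i : ℕ} {f : Sym2 V} (h : conn G c i f)
    {u v : V} (hf : f = s(u, v)) : (Gr (classF G c i)).Reachable u v := by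
  obtain ⟨a, b, hab, hr⟩ := h
  rw [hab, Sym2.eq_iff] at hf
  rcases hf with ⟨rfl, rfl⟩ | ⟨rfl, rfl⟩
  · exact hr
  · exact hr.symm

def onPath (c : Sym2 V → Finset ℕ) (i : ℕ) (f g : Sym2 V) : Prop :=
  ∃ u v, f = s(u, v) ∧ ∃ p : (Gr (classF G c i)).Walk u v, p.IsPath ∧ g ∈ p.edges

lemma onPath_mem {c : Sym2 V → Finset ℕ} {i : ℕ} {f g : Sym2 V}
    (h : onPath G c i f g) : g ∈ classF G c i := by
  obtain ⟨u, v, hf, p, hp, hg⟩ := h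
  have := p.edges_subset_edgeSet hg
  rw [Gr_edgeSet (fun e he => good_of_subset_edgeFinset G (classF_subset G) e he)] at this
  exact this

lemma onPath_conn {c : Sym2 V → Finset ℕ} {i : ℕ} {f g : Sym2 V}
    (h : onPath G c i f g) : conn G c i f := by
  obtain ⟨u, v, hf, p, hp, hg⟩ := h
  exact ⟨u, v, hf, ⟨p⟩⟩

/-- Removing an edge lying on a path between the ends of `f` (in an acyclic class)
disconnects the ends of `f`. -/
lemma onPath_remove {c : Sym2 V → Finset ℕ} {i : ℕ} {f g : Sym2 V}
    (hac : (Gr (classF G c i)).IsAcyclic) (h : onPath G c i f g)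
    {u v : V} (hf : f = s(u, v)) :
    ¬ (Gr ((classF G c i).erase g)).Reachable u v := by
  -- reduce to the representative used in h, up to symmetry
  obtain ⟨a, b, hab, p, hp, hg⟩ := h
  rw [hab, Sym2.eq_iff] at hf
  have key : ¬ (Gr ((classF G c i).erase g)).Reachable a b := by
    intro hr
    obtain ⟨w⟩ := hr
    have hsubE : ∀ e ∈ w.edges, e ∈ (Gr (classF G c i)).edgeSet := by
      intro e he
      have := w.edges_subset_edgeSet he
      exact SimpleGraph.edgeSet_mono (Gr_mono (Finset.erase_subset _ _)) this
    have hgnot : g ∉ w.edges := by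
      intro hmem
      have := w.edges_subset_edgeSet hmem
      rw [Gr_edgeSet (fun e he => good_of_subset_edgeFinset G
        ((Finset.erase_subset _ _).trans (classF_subset G)) e he)] at this
      exact (Finset.notMem_erase _ _) this
    set w2 := w.transfer (Gr (classF G c i)) hsubE with hw2
    have hpath2 : w2.bypass.IsPath := SimpleGraph.Walk.bypass_isPath _
    have huniq := hac.path_unique ⟨p, hp⟩ ⟨w2.bypass, hpath2⟩
    have hpeq : p = w2.bypass := congrArg Subtype.val huniq
    have : g ∈ w2.bypass.edges := hpeq ▸ hg
    have hsub2 := SimpleGraph.Walk.edges_bypass_subset w2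
    have : g ∈ w2.edges := hsub2 this
    rw [hw2, SimpleGraph.Walk.edges_transfer] at this
    exact hgnot this
  rcases hf with ⟨rfl, rfl⟩ | ⟨rfl, rfl⟩
  · exact key
  · exact fun hr => key hr.symm

-- ## augmenting sequences

def IsAug (c : Sym2 V → Finset ℕ) : Sym2 V → List (ℕ × Sym2 V) → ℕ → Prop
  | f, [], j => j ∈ Finset.Icc 1 (ell G f) ∧ j ∉ c f ∧ ¬ conn G c j f
  | f, (i, g) :: L, j =>
      i ∈ Finset.Icc 1 (ell G f) ∧ i ∉ c f ∧ onPath G c i f g ∧ IsAug c g L j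

lemma isAug_nil {c : Sym2 V → Finset ℕ} {f : Sym2 V} {j : ℕ} :
    IsAug G c f [] j ↔ j ∈ Finset.Icc 1 (ell G f) ∧ j ∉ c f ∧ ¬ conn G c j f := Iff.rfl

lemma isAug_cons {c : Sym2 V → Finset ℕ} {f g : Sym2 V} {i j : ℕ} {L : List (ℕ × Sym2 V)} :
    IsAug G c f ((i, g) :: L) j ↔
      i ∈ Finset.Icc 1 (ell G f) ∧ i ∉ c f ∧ onPath G c i f g ∧ IsAug G c g L j := Iff.rfl

def Chain (c : Sym2 V → Finset ℕ) : Sym2 V → List (ℕ × Sym2 V) → Sym2 V → Prop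
  | f, [], g => g = f
  | f, (i, h) :: L, g =>
      i ∈ Finset.Icc 1 (ell G f) ∧ i ∉ c f ∧ onPath G c i f h ∧ Chain c h L g

lemma chain_to_isAug {c : Sym2 V → Finset ℕ} {f₀ : Sym2 V} :
    ∀ {L : List (ℕ × Sym2 V)} {f : Sym2 V}, Chain G c f₀ L f →
      ∀ {j : ℕ}, j ∈ Finset.Icc 1 (ell G f) → j ∉ c f → ¬ conn G c j f →
      IsAug G c f₀ L j := by
  intro L
  induction L generalizing f₀ with
  | nil =>
    intro f hch j h1 h2 h3
    cases hch
    exact ⟨h1, h2, h3⟩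
  | cons p L ih =>
    intro f hch j h1 h2 h3
    obtain ⟨i, h⟩ := p
    obtain ⟨hc1, hc2, hc3, hc4⟩ := hch
    exact ⟨hc1, hc2, hc3, ih hc4 h1 h2 h3⟩

lemma chain_append {c : Sym2 V → Finset ℕ} {f₀ : Sym2 V} :
    ∀ {L : List (ℕ × Sym2 V)} {f : Sym2 V}, Chain G c f₀ L f →
      ∀ {j : ℕ} {g : Sym2 V}, j ∈ Finset.Icc 1 (ell G f) → j ∉ c f → onPath G c j f g →
      Chain G c f₀ (L ++ [(j, g)]) g := by
  intro L
  induction L generalizing f₀ with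
  | nil =>
    intro f hch j g h1 h2 h3
    cases hch
    exact ⟨h1, h2, h3, rfl⟩
  | cons p L ih =>
    intro f hch j g h1 h2 h3
    obtain ⟨i, h⟩ := p
    obtain ⟨hc1, hc2, hc3, hc4⟩ := hch
    exact ⟨hc1, hc2, hc3, ih hc4 h1 h2 h3⟩

lemma isAug_suffix {c : Sym2 V → Finset ℕ} :
    ∀ {P : List (ℕ × Sym2 V)} {f : Sym2 V} {i : ℕ} {g : Sym2 V} {Q : List (ℕ × Sym2 V)} {j : ℕ},
      IsAug G c f (P ++ (i, g) :: Q) j → IsAug G c g Q j := by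
  intro P
  induction P with
  | nil =>
    intro f i g Q j h
    exact h.2.2.2
  | cons p P ih =>
    intro f i g Q j h
    obtain ⟨a, b⟩ := p
    exact ih h.2.2.2

lemma isAug_pair_mem {c : Sym2 V → Finset ℕ} :
    ∀ {P : List (ℕ × Sym2 V)} {f : Sym2 V} {i : ℕ} {g : Sym2 V} {Q : List (ℕ × Sym2 V)} {j : ℕ},
      IsAug G c f (P ++ (i, g) :: Q) j → g ∈ classF G c i := by
  intro P
  induction P with
  | nil =>
    intro f i g Q j h
    exact onPath_mem G h.2.2.1
  | cons p P ih =>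
    intro f i g Q j h
    obtain ⟨a, b⟩ := p
    exact ih h.2.2.2

lemma isAug_replace {c : Sym2 V → Finset ℕ} :
    ∀ {P : List (ℕ × Sym2 V)} {f : Sym2 V} {i : ℕ} {g : Sym2 V} {Q Q' : List (ℕ × Sym2 V)}
      {j j' : ℕ},
      IsAug G c f (P ++ (i, g) :: Q) j → IsAug G c g Q' j' →
      IsAug G c f (P ++ (i, g) :: Q') j' := by
  intro P
  induction P with
  | nil =>
    intro f i g Q Q' j j' h h'
    exact ⟨h.1, h.2.1, h.2.2.1, h'⟩
  | cons p P ih =>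
    intro f i g Q Q' j j' h h'
    obtain ⟨a, b⟩ := p
    exact ⟨h.1, h.2.1, h.2.2.1, ih h.2.2.2 h'⟩

lemma acyclic_insert' {F : Finset (Sym2 V)} (hgood : Good F) (hac : (Gr F).IsAcyclic)
    {g : Sym2 V} (hgd : ¬ g.IsDiag)
    (hnr : ∀ u v, g = s(u, v) → ¬ (Gr F).Reachable u v) : (Gr (insert g F)).IsAcyclic := by
  revert hgd hnr
  induction g using Sym2.ind with
  | _ u v =>
    intro hgd hnr
    exact acyclic_insert hgood hac (fun h => hgd (Sym2.mk_isDiag_iff.2 h)) (hnr u v rfl)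

lemma swap_valid {c : Sym2 V → Finset ℕ} (hval : ValidCol G c) {g : Sym2 V}
    (hg : g ∈ G.edgeFinset) {b j : ℕ} (hb : b ∈ c g) (hjI : j ∈ Finset.Icc 1 (ell G g))
    (hj : j ∉ c g) (hnc : ¬ conn G c j g) :
    ValidCol G (Function.update c g (insert j ((c g).erase b))) ∧
      (∀ e, ((Function.update c g (insert j ((c g).erase b))) e).card = (c e).card) := by
  set X := insert j ((c g).erase b) with hX
  have hbj : b ≠ j := fun h => hj (h ▸ hb)
  have hcard : ∀ e, ((Function.update c g X) e).card = (c e).card := by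
    intro e
    by_cases he : e = g
    · subst he
      rw [Function.update_self, hX,
        Finset.card_insert_of_notMem (fun h => hj (Finset.erase_subset _ _ h))]
      have := Finset.card_erase_add_one hb
      omega
    · rw [Function.update_of_ne he]
  refine ⟨⟨?_, ?_⟩, hcard⟩
  · intro e he
    by_cases heg : e = g
    · subst heg
      refine ⟨?_, by rw [hcard]; exact (hval.1 _ he).2⟩
      rw [Function.update_self, hX]
      intro x hx
      rcases Finset.mem_insert.1 hx with rfl | hx
      · exact hjI
      · exact (hval.1 _ he).1 (Finset.erase_subset _ _ hx)
    · rw [Function.update_of_ne heg]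
      exact hval.1 _ he
  · intro i
    by_cases hij : i = j
    · subst hij
      rw [classF_update_mem G hg (Finset.mem_insert_self _ _)]
      refine acyclic_insert' (good_of_subset_edgeFinset G (classF_subset G)) (hval.2 i)
        (SimpleGraph.not_isDiag_of_mem_edgeSet G (SimpleGraph.mem_edgeFinset.1 hg)) ?_
      intro u v hguv hr
      exact hnc ⟨u, v, hguv, hr⟩
    · by_cases hiX : i ∈ X
      · rw [classF_update_mem G hg hiX]
        have hicg : i ∈ c g := by
          rcases Finset.mem_insert.1 hiX with rfl | h
          · exact absurd rfl hij
          · exact Finset.erase_subset _ _ h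
        rw [Finset.insert_eq_self.2 ((mem_classF G).2 ⟨hg, hicg⟩)]
        exact hval.2 i
      · rw [classF_update_not_mem G hiX]
        exact acyclic_of_le (Gr_mono (Finset.erase_subset _ _)) (hval.2 i)

lemma onPath_congr {c c' : Sym2 V → Finset ℕ} {i i' : ℕ}
    (h : classF G c i = classF G c' i') {f g : Sym2 V} (hp : onPath G c i f g) :
    onPath G c' i' f g := by
  unfold onPath at hp ⊢
  rw [← h]
  exact hp

lemma keystep {c : Sym2 V → Finset ℕ} (hval : ValidCol G c) {b j : ℕ} {g : Sym2 V}
    (hg : g ∈ G.edgeFinset) (hb : b ∈ c g) (hjc : j ∉ c g) :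
    ∀ (F : List (ℕ × Sym2 V)) (f₀ : Sym2 V),
      IsAug G c f₀ (F ++ [(b, g)]) j → f₀ ≠ g → (∀ p ∈ F, p.2 ≠ g) →
      ∃ L₁ j₁, IsAug G (Function.update c g (insert j ((c g).erase b))) f₀ L₁ j₁ ∧
        L₁.length ≤ F.length := by
  set X := insert j ((c g).erase b) with hX
  set c₁ := Function.update c g X with hc₁
  have hbj : b ≠ j := fun h => hjc (h ▸ hb)
  have hbX : b ∉ X := by
    rw [hX]
    intro h
    rcases Finset.mem_insert.1 h with h | h
    · exact hbj h
    · exact Finset.notMem_erase _ _ h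
  have hclassb : classF G c₁ b = (classF G c b).erase g := classF_update_not_mem G hbX
  have hclassj : classF G c₁ j = insert g (classF G c j) :=
    classF_update_mem G hg (Finset.mem_insert_self _ _)
  have hclassother : ∀ i, i ≠ b → i ≠ j → classF G c₁ i = classF G c i := by
    intro i hib hij
    by_cases hiX : i ∈ X
    · rw [classF_update_mem G hg hiX]
      have hicg : i ∈ c g := by
        rcases Finset.mem_insert.1 hiX with h | h
        · exact absurd h hij
        · exact Finset.erase_subset _ _ h
      rw [Finset.insert_eq_self.2 ((mem_classF G).2 ⟨hg, hicg⟩)]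
    · rw [classF_update_not_mem G hiX]
      apply Finset.erase_eq_of_notMem
      intro h
      have hicg := ((mem_classF G).1 h).2
      exact hiX (hX ▸ Finset.mem_insert_of_mem (Finset.mem_erase.2 ⟨hib, hicg⟩))
  have hc₁same : ∀ f, f ≠ g → c₁ f = c f := fun f hf => Function.update_of_ne hf _ _
  intro F
  induction F with
  | nil =>
    intro f₀ hAug hne _
    obtain ⟨hb1, hb2, hb3, _⟩ := hAug
    refine ⟨[], b, ?_, le_rfl⟩
    rw [isAug_nil]
    refine ⟨hb1, by rw [hc₁same f₀ hne]; exact hb2, ?_⟩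
    intro hcn
    obtain ⟨u, v, hf, hr⟩ := hcn
    rw [hclassb] at hr
    exact onPath_remove G (hval.2 b) hb3 hf hr
  | cons q F ih =>
    intro f₀ hAug hne hF
    obtain ⟨a, h⟩ := q
    obtain ⟨ha1, ha2, ha3, htail⟩ := hAug
    have hhg : h ≠ g := hF (a, h) List.mem_cons_self
    obtain ⟨L₁, j₁, hIs, hlen⟩ := ih h htail hhg (fun q hq => hF q (List.mem_cons_of_mem _ hq))
    by_cases hab : a = b
    · subst hab
      obtain ⟨u, v, hf, p0, hp0, hh⟩ := ha3
      by_cases hgp : g ∈ p0.edges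
      · -- early termination : removing g disconnects the ends of f₀ in class a
        refine ⟨[], a, ?_, by simp⟩
        rw [isAug_nil]
        refine ⟨ha1, by rw [hc₁same f₀ hne]; exact ha2, ?_⟩
        intro hcn
        obtain ⟨u', v', hf', hr⟩ := hcn
        rw [hclassb] at hr
        exact onPath_remove G (hval.2 a) ⟨u, v, hf, p0, hp0, hgp⟩ hf' hr
      · -- path avoids g : transfer it
        have hsubE : ∀ e ∈ p0.edges, e ∈ (Gr (classF G c₁ a)).edgeSet := by
          intro e he
          have h1 := p0.edges_subset_edgeSet he
          rw [Gr_edgeSet (good_of_subset_edgeFinset G (classF_subset G))] at h1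
          rw [hclassb, Gr_edgeSet (good_of_subset_edgeFinset G
            ((Finset.erase_subset _ _).trans (classF_subset G)))]
          exact Finset.mem_erase.2 ⟨fun hEq => hgp (hEq ▸ he), h1⟩
        refine ⟨(a, h) :: L₁, j₁, ?_, by simpa using hlen⟩
        rw [isAug_cons]
        refine ⟨ha1, by rw [hc₁same f₀ hne]; exact ha2, ?_, hIs⟩
        exact ⟨u, v, hf, p0.transfer _ hsubE, hp0.transfer hsubE, by
          rw [SimpleGraph.Walk.edges_transfer]; exact hh⟩
    · by_cases haj : a = j
      · subst haj
        obtain ⟨u, v, hf, p0, hp0, hh⟩ := ha3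
        have hsubE : ∀ e ∈ p0.edges, e ∈ (Gr (classF G c₁ a)).edgeSet := by
          intro e he
          have h1 := p0.edges_subset_edgeSet he
          rw [hclassj]
          exact SimpleGraph.edgeSet_mono (Gr_mono (Finset.subset_insert _ _)) h1
        refine ⟨(a, h) :: L₁, j₁, ?_, by simpa using hlen⟩
        rw [isAug_cons]
        refine ⟨ha1, by rw [hc₁same f₀ hne]; exact ha2, ?_, hIs⟩
        exact ⟨u, v, hf, p0.transfer _ hsubE, hp0.transfer hsubE, by
          rw [SimpleGraph.Walk.edges_transfer]; exact hh⟩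
      · refine ⟨(a, h) :: L₁, j₁, ?_, by simpa using hlen⟩
        rw [isAug_cons]
        exact ⟨ha1, by rw [hc₁same f₀ hne]; exact ha2,
          onPath_congr G (hclassother a hab haj).symm ha3, hIs⟩

lemma insert_direct {c : Sym2 V → Finset ℕ} (hval : ValidCol G c) {e₀ : Sym2 V}
    (he₀ : e₀ ∈ G.edgeFinset) (hcard : (c e₀).card ≤ 1) {j : ℕ}
    (hA : IsAug G c e₀ [] j) :
    ∃ c', ValidCol G c' ∧ (c' e₀).card = (c e₀).card + 1 ∧
      ∀ e, e ≠ e₀ → (c' e).card = (c e).card := by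
  obtain ⟨hjI, hjc, hnc⟩ := hA
  set X := insert j (c e₀) with hX
  refine ⟨Function.update c e₀ X, ⟨?_, ?_⟩, ?_, ?_⟩
  · intro e he
    by_cases hee : e = e₀
    · subst hee
      rw [Function.update_self, hX]
      constructor
      · intro x hx
        rcases Finset.mem_insert.1 hx with rfl | hx
        · exact hjI
        · exact (hval.1 _ he).1 hx
      · rw [Finset.card_insert_of_notMem hjc]
        omega
    · rw [Function.update_of_ne hee]
      exact hval.1 _ he
  · intro i
    by_cases hij : i = j
    · subst hij
      rw [classF_update_mem G he₀ (hX ▸ Finset.mem_insert_self _ _)]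
      refine acyclic_insert' (good_of_subset_edgeFinset G (classF_subset G)) (hval.2 i)
        (SimpleGraph.not_isDiag_of_mem_edgeSet G (SimpleGraph.mem_edgeFinset.1 he₀)) ?_
      intro u v huv hr
      exact hnc ⟨u, v, huv, hr⟩
    · by_cases hiX : i ∈ X
      · rw [classF_update_mem G he₀ hiX]
        have hic : i ∈ c e₀ := by
          rcases Finset.mem_insert.1 hiX with rfl | h
          · exact absurd rfl hij
          · exact h
        rw [Finset.insert_eq_self.2 ((mem_classF G).2 ⟨he₀, hic⟩)]
        exact hval.2 i
      · rw [classF_update_not_mem G hiX]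
        exact acyclic_of_le (Gr_mono (Finset.erase_subset _ _)) (hval.2 i)
  · rw [Function.update_self, hX, Finset.card_insert_of_notMem hjc]
  · intro e hee
    rw [Function.update_of_ne hee]

lemma execute : ∀ (n : ℕ) (c : Sym2 V → Finset ℕ), ValidCol G c → ∀ (e₀ : Sym2 V),
    e₀ ∈ G.edgeFinset → (c e₀).card ≤ 1 →
    ∀ (L : List (ℕ × Sym2 V)) (j : ℕ), IsAug G c e₀ L j → L.length ≤ n →
    ∃ c', ValidCol G c' ∧ (c' e₀).card = (c e₀).card + 1 ∧
      ∀ e, e ≠ e₀ → (c' e).card = (c e).card := by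
  intro n
  induction n with
  | zero =>
    intro c hval e₀ he₀ hc L j hA hlen
    have hnil : L = [] := List.eq_nil_of_length_eq_zero (by omega)
    subst hnil
    exact insert_direct G hval he₀ hc hA
  | succ n ih =>
    intro c hval e₀ he₀ hc L j hA hlen
    have hex : ∃ k, ∃ L' : List (ℕ × Sym2 V), ∃ j', IsAug G c e₀ L' j' ∧ L'.length = k :=
      ⟨L.length, L, j, hA, rfl⟩
    obtain ⟨L₀, j₀, hA₀, hlen₀⟩ := Nat.find_spec hex
    have hk_le : Nat.find hex ≤ L.length := Nat.find_min' hex ⟨L, j, hA, rfl⟩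
    rcases List.eq_nil_or_concat L₀ with rfl | ⟨F, q, rfl⟩
    · exact insert_direct G hval he₀ hc hA₀
    · obtain ⟨b, g⟩ := q
      rw [List.concat_eq_append] at hA₀ hlen₀
      have hlenF : F.length + 1 = Nat.find hex := by
        rw [← hlen₀]; simp
      have htailAug : IsAug G c g [] j₀ := isAug_suffix G (P := F) hA₀
      obtain ⟨hjI, hjc, hnc⟩ := htailAug
      have hgmem : g ∈ classF G c b := isAug_pair_mem G (P := F) hA₀
      have hgE : g ∈ G.edgeFinset := ((mem_classF G).1 hgmem).1
      have hbg : b ∈ c g := ((mem_classF G).1 hgmem).2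
      have hne₀ : e₀ ≠ g := by
        rintro rfl
        exact Nat.find_min hex (m := 0) (by omega) ⟨[], j₀, ⟨hjI, hjc, hnc⟩, rfl⟩
      have hFg : ∀ q' ∈ F, q'.2 ≠ g := by
        rintro ⟨a', g'⟩ hq' hq2
        simp only at hq2
        subst hq2
        obtain ⟨P, Q, hPQ⟩ := List.append_of_mem hq'
        have hdec : F ++ [(b, g')] = P ++ (a', g') :: (Q ++ [(b, g')]) := by
          rw [hPQ]; simp
        have hrep := isAug_replace G (hdec ▸ hA₀) (Q' := []) ⟨hjI, hjc, hnc⟩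
        have hFlen : F.length = P.length + Q.length + 1 := by
          rw [hPQ]
          simp only [List.length_append, List.length_cons]
          omega
        refine Nat.find_min hex (m := P.length + 1) (by omega)
          ⟨P ++ [(a', g')], j₀, ?_, by simp⟩
        simpa using hrep
      obtain ⟨L₁, j₁, hIs₁, hlen₁⟩ := keystep G hval hgE hbg hjc F e₀ hA₀ hne₀ hFg
      obtain ⟨hval₁, hcard₁⟩ := swap_valid G hval hgE hbg hjI hjc hnc
      obtain ⟨c', hval', hc'1, hc'2⟩ := ih _ hval₁ e₀ he₀
        (by rw [hcard₁ e₀]; exact hc) L₁ j₁ hIs₁ (by omega)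
      refine ⟨c', hval', ?_, ?_⟩
      · rw [hc'1, hcard₁ e₀]
      · intro e hee
        rw [hc'2 e hee, hcard₁ e]

lemma exists_aug {c : Sym2 V → Finset ℕ} (hval : ValidCol G c) {e₀ : Sym2 V}
    (he₀ : e₀ ∈ G.edgeFinset) (hc : (c e₀).card ≤ 1) : ∃ L j, IsAug G c e₀ L j := by
  by_contra hno
  push_neg at hno
  set S := G.edgeFinset.filter (fun f => ∃ L, Chain G c e₀ L f) with hS
  have he₀S : e₀ ∈ S := Finset.mem_filter.2 ⟨he₀, [], rfl⟩
  have hSsub : S ⊆ G.edgeFinset := Finset.filter_subset _ _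
  have hclos : ∀ f ∈ S, ∀ jj, jj ∈ Finset.Icc 1 (ell G f) → jj ∉ c f →
      ∃ u v, f = s(u, v) ∧ ∃ p : (Gr (classF G c jj)).Walk u v, p.IsPath ∧
        ∀ g ∈ p.edges, g ∈ S := by
    intro f hf jj hjI hjc
    obtain ⟨hfE, L, hch⟩ := Finset.mem_filter.1 hf
    have hcn : conn G c jj f := by
      by_contra hcn
      exact hno L jj (chain_to_isAug G hch hjI hjc hcn)
    obtain ⟨u, v, hfuv, hr⟩ := hcn
    obtain ⟨w⟩ := hr
    refine ⟨u, v, hfuv, w.bypass, SimpleGraph.Walk.bypass_isPath w, ?_⟩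
    intro g hg
    have hgpath : onPath G c jj f g :=
      ⟨u, v, hfuv, w.bypass, SimpleGraph.Walk.bypass_isPath w, hg⟩
    have hgE : g ∈ G.edgeFinset := classF_subset G (onPath_mem G hgpath)
    exact Finset.mem_filter.2 ⟨hgE, L ++ [(jj, g)], chain_append G hch hjI hjc hgpath⟩
  set M := (Finset.univ.sup (fun v => G.degree v)) + 1 with hM
  have hellM : ∀ f ∈ G.edgeFinset, ell G f ≤ M := by
    intro f
    induction f using Sym2.ind with
    | _ u v =>
      intro _
      rw [ell_mk, hM]
      have h1 : G.degree u ≤ Finset.univ.sup (fun v => G.degree v) := Finset.le_sup (f := fun v => G.degree v) (Finset.mem_univ u)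
      have h2 : G.degree v ≤ Finset.univ.sup (fun v => G.degree v) := Finset.le_sup (f := fun w => G.degree w) (Finset.mem_univ v)
      omega
  have hMdeg : ∀ v, degA S v + 1 ≤ M := by
    intro v
    have h1 := degA_le_degree G hSsub v
    have h2 : G.degree v ≤ Finset.univ.sup (fun v => G.degree v) := Finset.le_sup (f := fun w => G.degree w) (Finset.mem_univ v)
    omega
  set T : ℕ → Finset (Sym2 V) := fun jj => S.filter (fun f => jj ∈ c f) with hT
  have hTclass : ∀ jj, T jj ⊆ classF G c jj := by
    intro jj f hf
    rw [hT, Finset.mem_filter] at hf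
    exact (mem_classF G).2 ⟨hSsub hf.1, hf.2⟩
  have hTsub : ∀ jj, T jj ⊆ G.edgeFinset := fun jj => (hTclass jj).trans (classF_subset G)
  have hTac : ∀ jj, (Gr (T jj)).IsAcyclic :=
    fun jj => acyclic_of_le (Gr_mono (hTclass jj)) (hval.2 jj)
  have hTconn : ∀ jj, 1 ≤ jj → jj ≤ M → ∀ f ∈ S, jj ≤ ell G f →
      ∀ u v, f = s(u, v) → (Gr (T jj)).Reachable u v := by
    intro jj h1 h2 f hf hle u v hfuv
    have hfd : ¬ f.IsDiag :=
      SimpleGraph.not_isDiag_of_mem_edgeSet G (SimpleGraph.mem_edgeFinset.1 (hSsub hf))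
    have hne : u ≠ v := by
      intro hEq
      rw [hfuv, Sym2.mk_isDiag_iff] at hfd
      exact hfd hEq
    by_cases hjc : jj ∈ c f
    · have hfT : f ∈ T jj := Finset.mem_filter.2 ⟨hf, hjc⟩
      exact (Gr_adj.2 ⟨hfuv ▸ hfT, hne⟩).reachable
    · obtain ⟨u', v', hfuv', p, hp, hpS⟩ := hclos f hf jj (Finset.mem_Icc.2 ⟨h1, hle⟩) hjc
      have hsubE : ∀ e ∈ p.edges, e ∈ (Gr (T jj)).edgeSet := by
        intro e he
        have h3 := p.edges_subset_edgeSet he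
        rw [Gr_edgeSet (good_of_subset_edgeFinset G (classF_subset G))] at h3
        rw [Gr_edgeSet (good_of_subset_edgeFinset G (hTsub jj))]
        exact Finset.mem_filter.2 ⟨hpS e he, ((mem_classF G).1 h3).2⟩
      have hr' : (Gr (T jj)).Reachable u' v' := ⟨p.transfer _ hsubE⟩
      have heq : s(u, v) = s(u', v') := by rw [← hfuv, ← hfuv']
      rcases Sym2.eq_iff.1 heq with ⟨rfl, rfl⟩ | ⟨rfl, rfl⟩
      · exact hr'
      · exact hr'.symm
  have hcount := counting_claim G S hSsub ⟨e₀, he₀S⟩ M hMdeg T hTsub hTac hTconn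
  have hsum : ∑ jj ∈ Finset.Icc 1 M, (T jj).card = ∑ f ∈ S, (c f).card := by
    have h1 : ∀ jj, (T jj).card = ∑ f ∈ S, if jj ∈ c f then 1 else 0 :=
      fun jj => Finset.card_filter _ _
    rw [Finset.sum_congr rfl (fun jj _ => h1 jj), Finset.sum_comm]
    refine Finset.sum_congr rfl (fun f hf => ?_)
    rw [← Finset.card_filter]
    have hsub2 : c f ⊆ Finset.Icc 1 M := by
      refine ((hval.1 f (hSsub hf)).1).trans ?_
      intro x hx
      rw [Finset.mem_Icc] at hx ⊢
      exact ⟨hx.1, hx.2.trans (hellM f (hSsub hf))⟩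
    have heq2 : (Finset.Icc 1 M).filter (fun jj => jj ∈ c f) = c f := by
      ext x
      rw [Finset.mem_filter]
      exact ⟨fun h => h.2, fun h => ⟨hsub2 h, h⟩⟩
    rw [heq2]
  have hsum2 : (c e₀).card + ∑ f ∈ S.erase e₀, (c f).card = ∑ f ∈ S, (c f).card :=
    Finset.add_sum_erase S (fun f => (c f).card) he₀S
  have hle2 : ∑ f ∈ S.erase e₀, (c f).card ≤ 2 * (S.erase e₀).card := by
    have h4 := Finset.sum_le_sum (s := S.erase e₀) (f := fun f => (c f).card)
      (g := fun _ => 2) (fun f hf => (hval.1 f (hSsub (Finset.erase_subset _ _ hf))).2)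
    rwa [Finset.sum_const, smul_eq_mul, mul_comm] at h4
  have hcarde : (S.erase e₀).card + 1 = S.card := Finset.card_erase_add_one he₀S
  rw [hsum] at hcount
  omega

lemma insert_color {c : Sym2 V → Finset ℕ} (hval : ValidCol G c) {e₀ : Sym2 V}
    (he₀ : e₀ ∈ G.edgeFinset) (hc : (c e₀).card ≤ 1) :
    ∃ c', ValidCol G c' ∧ (c' e₀).card = (c e₀).card + 1 ∧
      ∀ e, e ≠ e₀ → (c' e).card = (c e).card := by
  obtain ⟨L, j, hA⟩ := exists_aug G hval he₀ hc
  exact execute G L.length c hval e₀ he₀ hc L j hA le_rfl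

noncomputable def defic (c : Sym2 V → Finset ℕ) : ℕ := ∑ e ∈ G.edgeFinset, (2 - (c e).card)

lemma main_coloring : ∃ c : Sym2 V → Finset ℕ, ValidCol G c ∧
    ∀ e ∈ G.edgeFinset, (c e).card = 2 := by
  have hstep : ∀ (d : ℕ) (c : Sym2 V → Finset ℕ), ValidCol G c → defic G c ≤ d →
      ∃ c', ValidCol G c' ∧ ∀ e ∈ G.edgeFinset, (c' e).card = 2 := by
    intro d
    induction d with
    | zero =>
      intro c hval hd
      refine ⟨c, hval, fun e he => ?_⟩
      have h1 : 2 - (c e).card = 0 :=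
        Finset.sum_eq_zero_iff.1 (Nat.le_zero.1 hd) e he
      have h2 := (hval.1 e he).2
      omega
    | succ d ih =>
      intro c hval hd
      by_cases hall : ∀ e ∈ G.edgeFinset, (c e).card = 2
      · exact ⟨c, hval, hall⟩
      · push_neg at hall
        obtain ⟨e₀, he₀, hne2⟩ := hall
        have hle1 : (c e₀).card ≤ 1 := by
          have := (hval.1 e₀ he₀).2
          omega
        obtain ⟨c', hval', h1, h2⟩ := insert_color G hval he₀ hle1
        refine ih c' hval' ?_
        have hlt : defic G c' < defic G c := by
          refine Finset.sum_lt_sum (fun e he => ?_) ⟨e₀, he₀, ?_⟩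
          · by_cases hee : e = e₀
            · subst hee
              rw [h1]
              omega
            · rw [h2 e hee]
          · rw [h1]
            omega
        omega
  have hempty : ValidCol G (fun _ => (∅ : Finset ℕ)) := by
    constructor
    · intro e _
      simp
    · intro i
      have : classF G (fun _ => (∅ : Finset ℕ)) i = ∅ := by
        rw [classF]
        simp
      rw [this, Gr_empty]
      exact SimpleGraph.isAcyclic_bot
  exact hstep (defic G (fun _ => ∅)) (fun _ => ∅) hempty le_rfl

end TwoColorAux

/-- For a finite simple graph `G` one can assign to each edge `{u, v}` a set of exactly
two colors from `{1, …, max (deg u) (deg v) + 1}` so that, for every color `i`, the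
spanning subgraph consisting of the edges carrying color `i` is acyclic. -/
theorem exists_two_coloring_acyclic {V : Type*} [Fintype V] [DecidableEq V]
    (G : SimpleGraph V) [DecidableRel G.Adj] :
    ∃ c : Sym2 V → Finset ℕ,
      (∀ u v, G.Adj u v → (c s(u, v)).card = 2 ∧
        c s(u, v) ⊆ Finset.Icc 1 (max (G.degree u) (G.degree v) + 1)) ∧
      ∀ i : ℕ, (edgePredSubgraph G fun e => i ∈ c e).IsAcyclic := by
  classical
  obtain ⟨c, hval, hfull⟩ := TwoColorAux.main_coloring G
  refine ⟨c, ?_, ?_⟩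
  · intro u v huv
    have he : s(u, v) ∈ G.edgeFinset := SimpleGraph.mem_edgeFinset.2 huv
    refine ⟨hfull _ he, ?_⟩
    exact (hval.1 _ he).1
  · intro i
    have heq : edgePredSubgraph G (fun e => i ∈ c e)
        = TwoColorAux.Gr (TwoColorAux.classF G c i) := by
      ext u v
      rw [TwoColorAux.Gr_adj, TwoColorAux.mem_classF G]
      change (G.Adj u v ∧ i ∈ c s(u, v)) ↔ _
      constructor
      · rintro ⟨hadj, hmem⟩
        exact ⟨⟨SimpleGraph.mem_edgeFinset.2 hadj, hmem⟩, hadj.ne⟩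
      · rintro ⟨⟨hE, hmem⟩, _⟩
        exact ⟨SimpleGraph.mem_edgeFinset.1 hE, hmem⟩
    rw [heq]
    exact hval.2 i
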